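/- Let C be a cycle on n₂ ≥ 3 vertices and let C† be obtained by the leaf-connecting operation: attach 2 new leaves to each vertex of C and then pair up all new leaves with edges. Then C† is an irregular graph with zero assortativity coefficient, i.e. 4|E†| · Σ_{ij ∈ E†} d_i d_j = (Σ_{ij ∈ E†}(d_i + d_j))², and |V†| = 3n₂. -/

import Mathlib

open Finset

attribute [local instance] Classical.propDecidable

namespace Neutral

/-- Number of edges of `G`. -/
noncomputable def m {V : Type*} [Fintype V] (G : SimpleGraph V) : ℕ :=
  G.edgeFinset.card

/-- `∑_{uv ∈ E} d_u · d_v`, each edge counted once. -/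
noncomputable def dd {V : Type*} [Fintype V] (G : SimpleGraph V) : ℕ :=
  ∑ e ∈ G.edgeFinset,
    Sym2.lift ⟨fun u v => G.degree u * G.degree v, fun _ _ => Nat.mul_comm _ _⟩ e

/-- `∑_{uv ∈ E} (d_u + d_v)`, each edge counted once. -/
noncomputable def ds {V : Type*} [Fintype V] (G : SimpleGraph V) : ℕ :=
  ∑ e ∈ G.edgeFinset,
    Sym2.lift ⟨fun u v => G.degree u + G.degree v, fun _ _ => Nat.add_comm _ _⟩ e

/-- `∑_{uv ∈ E} (d_u² + d_v²)`, each edge counted once. -/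
noncomputable def dsq {V : Type*} [Fintype V] (G : SimpleGraph V) : ℕ :=
  ∑ e ∈ G.edgeFinset,
    Sym2.lift ⟨fun u v => G.degree u ^ 2 + G.degree v ^ 2, fun _ _ => Nat.add_comm _ _⟩ e

/-- A graph is irregular if it is not regular of any degree. -/
def Irregular {V : Type*} [Fintype V] (G : SimpleGraph V) : Prop :=
  ¬ ∃ k, G.IsRegularOfDegree k

end Neutral

open Neutral

namespace Neutral

/-- The index type of the new leaves in the leaf-connecting operation:
`d_v` new leaves are attached to every vertex `v`. -/
noncomputable def Leaves {V : Type*} [Fintype V] (G : SimpleGraph V) : Type _ :=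
  Σ v : V, Fin (G.degree v)

noncomputable instance {V : Type*} [Fintype V] (G : SimpleGraph V) : Fintype (Leaves G) := by
  unfold Leaves; infer_instance

/-- One-directional adjacency for the leaf-connecting operation: the old edges of `G`
are kept, each new leaf is attached to its base vertex, and the new leaves are paired
up by the matching `σ`. -/
def lcS {V : Type*} [Fintype V] (G : SimpleGraph V) (σ : Leaves G → Leaves G) :
    (V ⊕ Leaves G) → (V ⊕ Leaves G) → Prop
  | Sum.inl u, Sum.inl v => G.Adj u v
  | Sum.inl u, Sum.inr l => l.1 = u
  | Sum.inr a, Sum.inr b => σ a = b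
  | _, _ => False

/-- The graph `G†` produced by the leaf-connecting operation with matching `σ`. -/
noncomputable def LeafConn {V : Type*} [Fintype V] (G : SimpleGraph V)
    (σ : Leaves G → Leaves G) : SimpleGraph (V ⊕ Leaves G) where
  Adj x y := x ≠ y ∧ (lcS G σ x y ∨ lcS G σ y x)
  symm := ⟨fun _ _ h => ⟨Ne.symm h.1, h.2.symm⟩⟩
  loopless := ⟨fun _ h => h.1 rfl⟩

end Neutral

namespace Neutral

/-- Sum over darts of a function of the edge. -/
lemma sum_dart_eq_two_mul {V : Type*} [Fintype V] (G : SimpleGraph V)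
    (f : Sym2 V → ℕ) :
    ∑ d : G.Dart, f d.edge = 2 * ∑ e ∈ G.edgeFinset, f e := by
  classical
  rw [← Finset.sum_fiberwise_of_maps_to (g := SimpleGraph.Dart.edge)
    (t := G.edgeFinset) (fun d _ => by simp [SimpleGraph.Dart.edge_mem])
    (fun d => f d.edge), Finset.mul_sum]
  refine Finset.sum_congr rfl fun e he => ?_
  rw [SimpleGraph.mem_edgeFinset] at he
  induction e with
  | _ v w =>
    let d : G.Dart := ⟨(v, w), he⟩
    have hfib : (Finset.univ.filter fun d' : G.Dart => d'.edge = s(v, w)) = {d, d.symm} :=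
      SimpleGraph.Dart.edge_fiber d
    rw [hfib, Finset.sum_pair d.symm_ne.symm, SimpleGraph.Dart.edge_symm]
    have hde : d.edge = s(v, w) := rfl
    rw [hde, two_mul]

lemma sum_dart_eq_sum_neighbors {V : Type*} [Fintype V] (G : SimpleGraph V)
    (f : Sym2 V → ℕ) :
    ∑ d : G.Dart, f d.edge = ∑ v, ∑ u ∈ G.neighborFinset v, f s(v, u) := by
  classical
  rw [← Finset.sum_fiberwise_of_maps_to (g := fun d : G.Dart => d.fst)
    (t := Finset.univ) (fun d _ => Finset.mem_univ _) (fun d => f d.edge)]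
  refine Finset.sum_congr rfl fun v _ => ?_
  have hfib : (Finset.univ.filter fun d : G.Dart => d.fst = v)
      = Finset.univ.image (G.dartOfNeighborSet v) := SimpleGraph.dart_fst_fiber G v
  rw [hfib, Finset.sum_image (fun a _ b _ h => G.dartOfNeighborSet_injective v h)]
  have hed : ∀ w : G.neighborSet v, (G.dartOfNeighborSet v w).edge = s(v, (w : V)) := fun w => rfl
  simp only [hed]
  rw [show G.neighborFinset v = (G.neighborSet v).toFinset from rfl,
    ← Finset.sum_set_coe (f := fun u => f s(v, u))]

lemma two_mul_sum_edges {V : Type*} [Fintype V] (G : SimpleGraph V)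
    (f : Sym2 V → ℕ) :
    2 * ∑ e ∈ G.edgeFinset, f e = ∑ v, ∑ u ∈ G.neighborFinset v, f s(v, u) := by
  rw [← sum_dart_eq_two_mul, sum_dart_eq_sum_neighbors]

section LC

variable {V : Type*} [Fintype V] (C : SimpleGraph V) (σ : Leaves C → Leaves C)

lemma lc_adj_ll (u v : V) : (LeafConn C σ).Adj (Sum.inl u) (Sum.inl v) ↔ C.Adj u v := by
  constructor
  · rintro ⟨hne, h | h⟩
    · exact h
    · exact h.symm
  · intro h
    exact ⟨by simp [C.ne_of_adj h], Or.inl h⟩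

lemma lc_adj_lr (u : V) (l : Leaves C) :
    (LeafConn C σ).Adj (Sum.inl u) (Sum.inr l) ↔ l.1 = u := by
  constructor
  · rintro ⟨hne, h | h⟩
    · exact h
    · exact h.elim
  · intro h
    exact ⟨by simp, Or.inl h⟩

lemma lc_adj_rr (hinv : Function.Involutive σ) (hnf : ∀ a, σ a ≠ a) (a b : Leaves C) :
    (LeafConn C σ).Adj (Sum.inr a) (Sum.inr b) ↔ b = σ a := by
  constructor
  · rintro ⟨hne, h | h⟩
    · exact h.symm
    · exact (hinv b).symm.trans (congrArg σ h)
  · rintro rfl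
    exact ⟨by simp; exact fun h => hnf a h.symm, Or.inl rfl⟩

lemma lc_nf_inl [DecidableEq (V ⊕ Leaves C)] (v : V) :
    (LeafConn C σ).neighborFinset (Sum.inl v) =
      (C.neighborFinset v).image Sum.inl ∪
        (Finset.univ.image fun i : Fin (C.degree v) => (Sum.inr (⟨v, i⟩ : Leaves C) : V ⊕ Leaves C)) := by
  ext y
  cases y with
  | inl u =>
      simp [SimpleGraph.mem_neighborFinset, lc_adj_ll]
  | inr a =>
      simp only [SimpleGraph.mem_neighborFinset, lc_adj_lr, Finset.mem_union,
        Finset.mem_image, Finset.mem_univ, true_and, SimpleGraph.mem_neighborFinset]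
      obtain ⟨w, i⟩ := a
      constructor
      · rintro rfl
        exact Or.inr ⟨i, rfl⟩
      · rintro (⟨u, _, h⟩ | ⟨j, h⟩)
        · exact absurd h (by simp)
        · obtain ⟨rfl, _⟩ := Sigma.mk.inj_iff.1 (Sum.inr.inj h)
          rfl

lemma lc_nf_inr [DecidableEq (V ⊕ Leaves C)] (hinv : Function.Involutive σ) (hnf : ∀ a, σ a ≠ a) (a : Leaves C) :
    (LeafConn C σ).neighborFinset (Sum.inr a) = {Sum.inl a.1, Sum.inr (σ a)} := by
  ext y
  cases y with
  | inl u =>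
      have := lc_adj_lr C σ u a
      simp [SimpleGraph.mem_neighborFinset, SimpleGraph.adj_comm, this, eq_comm]
  | inr b =>
      simp [SimpleGraph.mem_neighborFinset, SimpleGraph.adj_comm,
        lc_adj_rr C σ hinv hnf a b]

lemma lc_mk_inj (v : V) : Function.Injective
    fun i : Fin (C.degree v) => (Sum.inr (⟨v, i⟩ : Leaves C) : V ⊕ Leaves C) :=
  fun _ _ h => eq_of_heq (Sigma.mk.inj_iff.1 (Sum.inr.inj h)).2

lemma lc_disj [DecidableEq (V ⊕ Leaves C)] (v : V) : Disjoint ((C.neighborFinset v).image Sum.inl)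
    (Finset.univ.image fun i : Fin (C.degree v) => (Sum.inr (⟨v, i⟩ : Leaves C) : V ⊕ Leaves C)) := by
  rw [Finset.disjoint_left]
  rintro x hx hy
  obtain ⟨u, -, rfl⟩ := Finset.mem_image.1 hx
  obtain ⟨i, -, h⟩ := Finset.mem_image.1 hy
  cases h

lemma lc_deg_inl (hreg : C.IsRegularOfDegree 2) (v : V) :
    (LeafConn C σ).degree (Sum.inl v) = 4 := by
  classical
  show ((LeafConn C σ).neighborFinset (Sum.inl v)).card = 4
  rw [lc_nf_inl, Finset.card_union_of_disjoint (lc_disj C v),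
    Finset.card_image_of_injective _ Sum.inl_injective,
    Finset.card_image_of_injective _ (lc_mk_inj C v),
    Finset.card_univ, Fintype.card_fin,
    SimpleGraph.card_neighborFinset_eq_degree, hreg v]

lemma lc_deg_inr (hinv : Function.Involutive σ) (hnf : ∀ a, σ a ≠ a) (a : Leaves C) :
    (LeafConn C σ).degree (Sum.inr a) = 2 := by
  classical
  show ((LeafConn C σ).neighborFinset (Sum.inr a)).card = 2
  rw [lc_nf_inr C σ hinv hnf a,
    Finset.card_insert_of_notMem (by simp), Finset.card_singleton]

lemma lc_sumdeg_inl (hreg : C.IsRegularOfDegree 2) (hinv : Function.Involutive σ)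
    (hnf : ∀ a, σ a ≠ a) (v : V) :
    ∑ y ∈ (LeafConn C σ).neighborFinset (Sum.inl v), (LeafConn C σ).degree y = 12 := by
  rw [lc_nf_inl, Finset.sum_union (lc_disj C v),
    Finset.sum_image (fun a _ b _ h => Sum.inl_injective h),
    Finset.sum_image (fun a _ b _ h => lc_mk_inj C v h)]
  simp only [lc_deg_inl C σ hreg, lc_deg_inr C σ hinv hnf, Finset.sum_const, Finset.card_univ,
    Fintype.card_fin, SimpleGraph.card_neighborFinset_eq_degree, hreg v, smul_eq_mul]
  refine (congrArg (2 * 4 + ·) (Finset.sum_congr rfl fun x _ => lc_deg_inr C σ hinv hnf ⟨v, x⟩)).trans ?_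
  simp [Finset.sum_const, Finset.card_univ, Fintype.card_fin, hreg v]

lemma lc_sumdeg_inr (hreg : C.IsRegularOfDegree 2) (hinv : Function.Involutive σ)
    (hnf : ∀ a, σ a ≠ a) (a : Leaves C) :
    ∑ y ∈ (LeafConn C σ).neighborFinset (Sum.inr a), (LeafConn C σ).degree y = 6 := by
  rw [lc_nf_inr C σ hinv hnf a, Finset.sum_pair (by simp),
    lc_deg_inl C σ hreg, lc_deg_inr C σ hinv hnf]

end LC

end Neutral

/-- if `C` is a cycle on `n₂ ≥ 3` vertices (connected and 2-regular) and
`C†` is obtained by the leaf-connecting operation (two new leaves per vertex, all new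
leaves paired up by a perfect matching `σ`), then `C†` is irregular with zero
assortativity coefficient, and has `3n₂` vertices. -/
theorem stmt_9 {V : Type*} [Fintype V] (C : SimpleGraph V) (n₂ : ℕ)
    (hcard : Fintype.card V = n₂) (hn : 3 ≤ n₂)
    (hconn : C.Connected) (hreg : C.IsRegularOfDegree 2)
    (σ : Leaves C → Leaves C) (hinv : Function.Involutive σ) (hnf : ∀ a, σ a ≠ a) :
    Irregular (LeafConn C σ) ∧
      4 * m (LeafConn C σ) * dd (LeafConn C σ) = (ds (LeafConn C σ)) ^ 2 ∧
      Fintype.card (V ⊕ Leaves C) = 3 * n₂ := by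
  set G := LeafConn C σ with hG
  have deg_inl : ∀ v : V, G.degree (Sum.inl v) = 4 := lc_deg_inl C σ hreg
  have deg_inr : ∀ a : Leaves C, G.degree (Sum.inr a) = 2 := lc_deg_inr C σ hinv hnf
  have hleaves : Fintype.card (Leaves C) = 2 * n₂ := by
    have h1 : Fintype.card (Leaves C) = Fintype.card (Σ v : V, Fin (C.degree v)) :=
      Fintype.card_congr (Equiv.cast rfl)
    rw [h1, Fintype.card_sigma]
    simp only [Fintype.card_fin]
    rw [Finset.sum_congr rfl fun v _ => hreg v, Finset.sum_const, Finset.card_univ, hcard,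
      smul_eq_mul]
    ring
  have sumN_inl : ∀ v : V, ∑ y ∈ G.neighborFinset (Sum.inl v), G.degree y = 12 :=
    lc_sumdeg_inl C σ hreg hinv hnf
  have sumN_inr : ∀ a : Leaves C, ∑ y ∈ G.neighborFinset (Sum.inr a), G.degree y = 6 :=
    lc_sumdeg_inr C σ hreg hinv hnf
  have cardN_inl : ∀ v : V, (G.neighborFinset (Sum.inl v)).card = 4 := fun v => by
    rw [SimpleGraph.card_neighborFinset_eq_degree, deg_inl v]
  have cardN_inr : ∀ a : Leaves C, (G.neighborFinset (Sum.inr a)).card = 2 := fun a => by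
    rw [SimpleGraph.card_neighborFinset_eq_degree, deg_inr a]
  have hm : 2 * m G = 8 * n₂ := by
    unfold m
    rw [Finset.card_eq_sum_ones, two_mul_sum_edges G (fun _ => 1), Fintype.sum_sum_type]
    have h1 : ∀ v : V, (∑ _u ∈ G.neighborFinset (Sum.inl v), 1) = 4 := by
      intro v; rw [Finset.sum_const, smul_eq_mul, mul_one, cardN_inl v]
    have h2 : ∀ a : Leaves C, (∑ _u ∈ G.neighborFinset (Sum.inr a), 1) = 2 := by
      intro a; rw [Finset.sum_const, smul_eq_mul, mul_one, cardN_inr a]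
    rw [Finset.sum_congr rfl fun v _ => h1 v, Finset.sum_congr rfl fun a _ => h2 a,
      Finset.sum_const, Finset.sum_const, Finset.card_univ, Finset.card_univ, hcard, hleaves,
      smul_eq_mul, smul_eq_mul]
    ring
  have hdd : 2 * dd G = 72 * n₂ := by
    unfold dd
    rw [two_mul_sum_edges G _, Fintype.sum_sum_type]
    simp only [Sym2.lift_mk]
    have h1 : ∀ v : V,
        (∑ u ∈ G.neighborFinset (Sum.inl v), G.degree (Sum.inl v) * G.degree u) = 48 := by
      intro v; rw [← Finset.mul_sum, sumN_inl v, deg_inl v]; norm_num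
    have h2 : ∀ a : Leaves C,
        (∑ u ∈ G.neighborFinset (Sum.inr a), G.degree (Sum.inr a) * G.degree u) = 12 := by
      intro a; rw [← Finset.mul_sum, sumN_inr a, deg_inr a]; norm_num
    rw [Finset.sum_congr rfl fun v _ => h1 v, Finset.sum_congr rfl fun a _ => h2 a,
      Finset.sum_const, Finset.sum_const, Finset.card_univ, Finset.card_univ, hcard, hleaves,
      smul_eq_mul, smul_eq_mul]
    ring
  have hds : 2 * ds G = 48 * n₂ := by
    unfold ds
    rw [two_mul_sum_edges G _, Fintype.sum_sum_type]
    simp only [Sym2.lift_mk]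
    have h1 : ∀ v : V,
        (∑ u ∈ G.neighborFinset (Sum.inl v), (G.degree (Sum.inl v) + G.degree u)) = 28 := by
      intro v
      rw [Finset.sum_add_distrib, sumN_inl v, Finset.sum_const, cardN_inl v, deg_inl v,
        smul_eq_mul]
    have h2 : ∀ a : Leaves C,
        (∑ u ∈ G.neighborFinset (Sum.inr a), (G.degree (Sum.inr a) + G.degree u)) = 10 := by
      intro a
      rw [Finset.sum_add_distrib, sumN_inr a, Finset.sum_const, cardN_inr a, deg_inr a,
        smul_eq_mul]
    rw [Finset.sum_congr rfl fun v _ => h1 v, Finset.sum_congr rfl fun a _ => h2 a,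
      Finset.sum_const, Finset.sum_const, Finset.card_univ, Finset.card_univ, hcard, hleaves,
      smul_eq_mul, smul_eq_mul]
    ring
  refine ⟨?_, ?_, ?_⟩
  · rintro ⟨k, hk⟩
    obtain ⟨v⟩ : Nonempty V := Fintype.card_pos_iff.1 (by omega)
    have h4 := hk (Sum.inl v)
    have h2 := hk (Sum.inr ⟨v, ⟨0, by rw [hreg v]; norm_num⟩⟩ : V ⊕ Leaves C)
    rw [deg_inl] at h4
    replace h2 := (deg_inr _).symm.trans h2
    omega
  · have hm' : m G = 4 * n₂ := by omega
    have hdd' : dd G = 36 * n₂ := by omega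
    have hds' : ds G = 24 * n₂ := by omega
    rw [hm', hdd', hds']; ring
  · rw [Fintype.card_sum, hcard, hleaves]; ring
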